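/- There exists an infinite binary word that is 7/3 power-free but contains infinitely many overlaps (subwords with period p and length > 2p). -/

import Mathlib

/-- `u` has period `p`: u(i) = u(i+p) for all valid indices. -/
def HasPeriod (u : List Bool) (p : ℕ) : Prop :=
  ∀ i, i + p < u.length → u.getD i false = u.getD (i + p) false

/-- The finite word `u` occurs in the infinite word `w` at position `i`. -/
def OccursAt (w : ℕ → Bool) (u : List Bool) (i : ℕ) : Prop :=
  ∀ j < u.length, u.getD j false = w (i + j)

namespace Aux73

/-- Fueled recursion computing the word `w` with `w 0 = 0`, `w 1 = 1`,
`w (n+2) = w (n/4) xor (n % 4 ∈ {1,2})`. -/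
def go : ℕ → ℕ → Bool
  | _, 0 => false
  | _, 1 => true
  | 0, _ => false
  | fuel+1, n+2 => xor (go fuel (n / 4)) (decide (n % 4 = 1) || decide (n % 4 = 2))

/-- The infinite word. -/
def w (n : ℕ) : Bool := go n n

lemma go_eq : ∀ n f1 f2, n ≤ f1 → n ≤ f2 → go f1 n = go f2 n := by
  intro n
  induction n using Nat.strong_induction_on with
  | _ n IH =>
    match n with
    | 0 => intro f1 f2 _ _; cases f1 <;> cases f2 <;> rfl
    | 1 =>
      intro f1 f2 h1 h2
      match f1, f2 with
      | f1+1, f2+1 => rfl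
    | (m+2) =>
      intro f1 f2 h1 h2
      match f1, f2 with
      | f1+1, f2+1 =>
        show xor (go f1 (m/4)) _ = xor (go f2 (m/4)) _
        rw [IH (m/4) (by omega) f1 f2 (by omega) (by omega)]

lemma w_rec (n : ℕ) : w (n+2) = xor (w (n/4)) (decide (n % 4 = 1) || decide (n % 4 = 2)) := by
  show go (n+2) (n+2) = _
  show xor (go (n+1) (n/4)) _ = _
  rw [go_eq (n/4) (n+1) (n/4) (by omega) le_rfl]
  rfl

/-- level-1 word : `x1 = μ⁻¹`-style companion, `w`'s μ-preimage structure. -/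
def x1 (n : ℕ) : Bool := if n % 2 = 0 then w (n/2) else !(w (n/2))

def x2 (n : ℕ) : Bool := if n % 2 = 0 then x1 (n/2) else !(x1 (n/2))

def Rel (x y : ℕ → Bool) : Prop := ∀ k, y (2*k) = x k ∧ y (2*k+1) = !(x k)

lemma rel_w_x1 : Rel w x1 := by
  intro k
  have h1 : (2*k) % 2 = 0 := by omega
  have h2 : (2*k)/2 = k := by omega
  have h3 : (2*k+1) % 2 = 1 := by omega
  have h4 : (2*k+1)/2 = k := by omega
  constructor
  · simp [x1, h1, h2]
  · simp [x1, h3, h4]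

lemma rel_x1_x2 : Rel x1 x2 := by
  intro k
  have h1 : (2*k) % 2 = 0 := by omega
  have h2 : (2*k)/2 = k := by omega
  have h3 : (2*k+1) % 2 = 1 := by omega
  have h4 : (2*k+1)/2 = k := by omega
  constructor
  · simp [x2, h1, h2]
  · simp [x2, h3, h4]

lemma pairing_of_rel {x y : ℕ → Bool} (h : Rel x y) : ∀ k, y (2*k+1) = !(y (2*k)) := by
  intro k
  rw [(h k).2, (h k).1]

/-- The fundamental self-similarity: `w (n+2) = μ²(w) (n)`. -/
lemma w_shift (n : ℕ) : w (n + 2) = x2 n := by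
  rw [w_rec]
  have h4 : n % 4 = 0 ∨ n % 4 = 1 ∨ n % 4 = 2 ∨ n % 4 = 3 := by omega
  rcases h4 with h|h|h|h
  · have e1 : n % 2 = 0 := by omega
    have e2 : (n/2) % 2 = 0 := by omega
    have e3 : n/2/2 = n/4 := by omega
    simp [x2, x1, e1, e2, e3, h]
  · have e1 : n % 2 = 1 := by omega
    have e2 : (n/2) % 2 = 0 := by omega
    have e3 : n/2/2 = n/4 := by omega
    simp [x2, x1, e1, e2, e3, h]
  · have e1 : n % 2 = 0 := by omega
    have e2 : (n/2) % 2 = 1 := by omega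
    have e3 : n/2/2 = n/4 := by omega
    simp [x2, x1, e1, e2, e3, h]
  · have e1 : n % 2 = 1 := by omega
    have e2 : (n/2) % 2 = 1 := by omega
    have e3 : n/2/2 = n/4 := by omega
    simp [x2, x1, e1, e2, e3, h]

/-- A periodicity window. -/
def Win (y : ℕ → Bool) (a l p : ℕ) : Prop := ∀ j, a ≤ j → j + p < a + l → y j = y (j + p)

/-- In a word whose (2k,2k+1) letter pairs always differ, there is no window
with odd period `p` of length `≥ 2p+1`. -/
lemma odd_contra {y : ℕ → Bool} (hpair : ∀ k, y (2*k+1) = !(y (2*k)))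
    {a l p : ℕ} (hodd : p % 2 = 1) (hl : 2*p + 1 ≤ l) (hwin : Win y a l p) : False := by
  have alt : ∀ m, a ≤ m → m + 1 ≤ a + 2*p → y (m+1) = !(y m) := by
    intro m hm hm2
    rcases Nat.mod_two_eq_zero_or_one m with he | ho
    · obtain ⟨k, rfl⟩ : ∃ k, m = 2*k := ⟨m/2, by omega⟩
      exact hpair k
    · rcases le_or_gt (m+1) (a+p) with hc | hc
      · have h1 : y m = y (m+p) := hwin m hm (by omega)
        have h2 : y (m+1) = y (m+1+p) := hwin (m+1) (by omega) (by omega)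
        obtain ⟨k, hk⟩ : ∃ k, m + p = 2*k := ⟨(m+p)/2, by omega⟩
        have h3 : y (m+p+1) = !(y (m+p)) := by rw [hk]; exact hpair k
        rw [h2, show m+1+p = (m+p)+1 by omega, h3, ← h1]
      · have h1 : y (m-p) = y ((m-p)+p) := hwin (m-p) (by omega) (by omega)
        have h2 : y ((m-p)+1) = y ((m-p)+1+p) := hwin ((m-p)+1) (by omega) (by omega)
        obtain ⟨k, hk⟩ : ∃ k, m - p = 2*k := ⟨(m-p)/2, by omega⟩
        have h3 : y ((m-p)+1) = !(y (m-p)) := by rw [hk]; exact hpair k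
        have e1 : (m-p)+p = m := by omega
        have e2 : (m-p)+1+p = m+1 := by omega
        rw [e1] at h1
        rw [e2] at h2
        rw [← h2, h3, h1]
  have key : ∀ i, i ≤ 2*p → y (a+i) = xor (y a) (decide (i % 2 = 1)) := by
    intro i
    induction i with
    | zero => intro _; simp
    | succ i ih =>
      intro hi
      have h1 := alt (a+i) (by omega) (by omega)
      rw [show a + (i+1) = (a+i)+1 by omega, h1, ih (by omega)]
      rcases Nat.mod_two_eq_zero_or_one i with h|h
      · have h' : (i+1) % 2 = 1 := by omega
        simp [h, h']
      · have h' : (i+1) % 2 = 0 := by omega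
        simp [h, h']
  have h1 := key p (by omega)
  have h2 := hwin a le_rfl (by omega)
  simp only [hodd] at h1
  simp only [decide_true, Bool.xor_true] at h1
  rw [h1] at h2
  simp at h2

/-- Descent for even periods: a period-`2P` window in `y = μ(x)` yields a period-`P`
window in `x` covering (at least) the corresponding half-positions. -/
lemma even_descent {x y : ℕ → Bool} (hrel : Rel x y) {a l p P : ℕ}
    (hp : p = 2*P) (hl : p + 1 ≤ l) (hwin : Win y a l p) :
    Win x (a/2) ((a+l+1)/2 - a/2) P := by
  intro n hn hnB
  have hxn : y (2*n) = x n := (hrel n).1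
  have hxnP : y (2*n + p) = x (n + P) := by
    have h := (hrel (n+P)).1
    rw [show 2*(n+P) = 2*n + p by omega] at h
    exact h
  rw [← hxn, ← hxnP]
  have hub : 2*n + p < a + l := by omega
  rcases le_or_gt a (2*n) with hc | hc
  · exact hwin (2*n) hc hub
  · have ha : a = 2*n + 1 := by omega
    have h1 : y (2*n+1) = !(y (2*n)) := pairing_of_rel hrel n
    have h2 : y a = y (a + p) := hwin a le_rfl (by omega)
    have h3 : y (2*(n+P)+1) = !(y (2*(n+P))) := pairing_of_rel hrel (n+P)
    have e : a + p = 2*(n+P)+1 := by omega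
    rw [e, ha, h3, h1] at h2
    have h4 : y (2*n) = y (2*(n+P)) := by
      rcases Bool.eq_false_or_eq_true (y (2*n)) with hb | hb <;>
        rcases Bool.eq_false_or_eq_true (y (2*(n+P))) with hb' | hb' <;>
          simp [hb, hb'] at h2 ⊢
    rw [show 2*(n+P) = 2*n+p by omega] at h4
    exact h4

set_option maxRecDepth 100000 in
/-- Explicit check of short near-maximal periods at positions 0 and 1. -/
lemma prefact : ∀ p < 31, ∀ a < 2, 1 ≤ p →
    ∃ j < 80, a ≤ j ∧ j + p < a + (7*p+1)/3 ∧ w j ≠ w (j+p) := by decide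

/-- Master lemma: `w` has no window of period `p` and length `l` with `7p ≤ 3l + d`
(under the deficit-coupling invariants). -/
lemma master : ∀ l a p d, Win w a l p → 1 ≤ p → 7*p ≤ 3*l + d → d < p → d ≤ 7 →
    (a ≤ 1 → d ≤ 1) → False := by
  intro l
  induction l using Nat.strong_induction_on with
  | _ l IH =>
    intro a p d hwin hp hexp hdp hd7 hpre
    rcases le_or_gt a 1 with ha | ha
    · have hd1 : d ≤ 1 := hpre ha
      rcases le_or_gt p 30 with hp30 | hp30
      · obtain ⟨j, hj80, hja, hjlt, hne⟩ := prefact p (by omega) a (by omega) hp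
        exact hne (hwin j hja (by omega))
      · have hwin2 : Win w 2 (l + a - 2) p := by
          intro j hj hjl
          exact hwin j (by omega) (by omega)
        exact IH (l + a - 2) (by omega) 2 p (d+6) hwin2 hp (by omega) (by omega) (by omega)
          (by omega)
    · have hwx2 : Win x2 (a-2) l p := by
        intro j hj hjl
        have h := hwin (j+2) (by omega) (by omega)
        rw [show j+2+p = (j+p)+2 by omega] at h
        rw [← w_shift j, ← w_shift (j+p)]
        exact h
      have hl2p : 2*p + 1 ≤ l := by omega
      rcases Nat.mod_two_eq_zero_or_one p with hpe | hpo
      · obtain ⟨P, hP⟩ : ∃ P, p = 2*P := ⟨p/2, by omega⟩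
        have hw1 : Win x1 ((a-2)/2) (((a-2)+l+1)/2 - (a-2)/2) P :=
          even_descent rel_x1_x2 hP (by omega) hwx2
        have hexp1 : 7*P ≤ 3*(((a-2)+l+1)/2 - (a-2)/2) + d/2 := by omega
        rcases Nat.mod_two_eq_zero_or_one P with hPe | hPo
        · obtain ⟨Q, hQ⟩ : ∃ Q, P = 2*Q := ⟨P/2, by omega⟩
          have hw2 : Win w (((a-2)/2)/2)
              ((((a-2)/2)+((((a-2)+l+1)/2 - (a-2)/2))+1)/2 - ((a-2)/2)/2) Q :=
            even_descent rel_w_x1 hQ (by omega) hw1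
          exact IH _ (by omega) _ Q (d/4) hw2 (by omega) (by omega) (by omega) (by omega)
            (fun _ => by omega)
        · exact odd_contra (pairing_of_rel rel_w_x1) hPo (by omega) hw1
      · exact odd_contra (pairing_of_rel rel_x1_x2) hpo hl2p hwx2

/-- The μ² substitution on finite words. -/
def Mu4 (u : List Bool) : List Bool := u.flatMap (fun b => [b, !b, !b, b])

lemma len_Mu4 (u : List Bool) : (Mu4 u).length = 4 * u.length := by
  induction u with
  | nil => rfl
  | cons b t ih => simp [Mu4] at ih ⊢; omega

lemma getD_Mu4 (u : List Bool) : ∀ j, j < 4 * u.length →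
    (Mu4 u).getD j false = xor (u.getD (j/4) false)
      (decide (j % 4 = 1) || decide (j % 4 = 2)) := by
  induction u with
  | nil => intro j hj; simp at hj
  | cons b t ih =>
    intro j hj
    have hcons : Mu4 (b :: t) = b :: (!b) :: (!b) :: b :: Mu4 t := by simp [Mu4]
    match j with
    | 0 => rw [hcons]; simp
    | 1 => rw [hcons]; simp
    | 2 => rw [hcons]; simp
    | 3 => rw [hcons]; simp
    | (j'+4) =>
      rw [hcons]
      have e1 : (j'+4)/4 = j'/4 + 1 := by omega
      have e2 : (j'+4) % 4 = j' % 4 := by omega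
      have hlen : j' < 4 * t.length := by simp at hj; omega
      have : (b :: (!b) :: (!b) :: b :: Mu4 t).getD (j'+4) false = (Mu4 t).getD j' false := by
        simp [List.getD]
      rw [this, ih j' hlen, e1, e2]
      simp [List.getD]

lemma hasPeriod_Mu4 {u : List Bool} {p : ℕ} (h : HasPeriod u p) :
    HasPeriod (Mu4 u) (4*p) := by
  intro i hi
  rw [len_Mu4] at hi
  rw [getD_Mu4 u i (by omega), getD_Mu4 u (i + 4*p) (by omega)]
  have e1 : (i + 4*p)/4 = i/4 + p := by omega
  have e2 : (i + 4*p) % 4 = i % 4 := by omega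
  rw [e1, e2, h (i/4) (by omega)]

lemma w_block (m r : ℕ) (hr : r < 4) :
    w (4*m + 2 + r) = xor (w m) (decide (r = 1) || decide (r = 2)) := by
  have h := w_rec (4*m + r)
  rw [show 4*m + r + 2 = 4*m + 2 + r by omega] at h
  rw [h, show (4*m+r)/4 = m by omega, show (4*m+r) % 4 = r by omega]

lemma occursAt_Mu4 {u : List Bool} {i : ℕ} (h : OccursAt w u i) :
    OccursAt w (Mu4 u) (4*i + 2) := by
  intro j hj
  rw [len_Mu4] at hj
  rw [getD_Mu4 u j hj]
  have h1 : u.getD (j/4) false = w (i + j/4) := h (j/4) (by omega)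
  have h2 := w_block (i + j/4) (j % 4) (by omega)
  rw [show 4*(i + j/4) + 2 + j % 4 = 4*i + 2 + j by omega] at h2
  rw [h1, ← h2]

/-- The base overlap: the first 17 letters of `w`, with period 8 (a 9/4-power). -/
def u0 : List Bool :=
  [false, true, false, true, true, false, true, false, false, true, false, true,
   true, false, true, false, false]

lemma occ_u0 : OccursAt w u0 0 := by
  intro j hj
  have hj' : j < 17 := by simpa [u0] using hj
  interval_cases j <;> decide

lemma per_u0 : HasPeriod u0 8 := by
  intro i hi
  have hi' : i < 9 := by simp [u0] at hi; omega
  interval_cases i <;> decide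

end Aux73

theorem exists_73free_with_overlaps :
    ∃ w : ℕ → Bool,
      (∀ u p i, OccursAt w u i → 1 ≤ p → HasPeriod u p → 3 * u.length < 7 * p) ∧
      (∀ N, ∃ i ≥ N, ∃ u p, OccursAt w u i ∧ 1 ≤ p ∧ HasPeriod u p ∧ 2 * p < u.length) := by
  refine ⟨Aux73.w, ?_, ?_⟩
  · intro u p i hocc hp hper
    by_contra hcon
    push_neg at hcon
    have hwin : Aux73.Win Aux73.w i u.length p := by
      intro j hj hjl
      have e1 := hocc (j - i) (by omega)
      have e2 := hocc (j - i + p) (by omega)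
      have e3 := hper (j - i) (by omega)
      rw [show i + (j-i) = j by omega] at e1
      rw [show i + (j-i+p) = j+p by omega] at e2
      rw [← e1, e3, e2]
    exact Aux73.master u.length i p 0 hwin hp (by omega) hp (by omega) (fun _ => by omega)
  · have fam : ∀ N, ∃ i u p, N ≤ i ∧ OccursAt Aux73.w u i ∧ 1 ≤ p ∧ HasPeriod u p ∧
        2*p < u.length := by
      intro N
      induction N with
      | zero => exact ⟨0, Aux73.u0, 8, by omega, Aux73.occ_u0, by omega, Aux73.per_u0, by decide⟩
      | succ N ih =>
        obtain ⟨i, u, p, hNi, hocc, hp, hper, hov⟩ := ih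
        exact ⟨4*i + 2, Aux73.Mu4 u, 4*p, by omega, Aux73.occursAt_Mu4 hocc, by omega,
          Aux73.hasPeriod_Mu4 hper, by rw [Aux73.len_Mu4]; omega⟩
    intro N
    obtain ⟨i, u, p, hNi, hocc, hp, hper, hov⟩ := fam N
    exact ⟨i, hNi, u, p, hocc, hp, hper, hov⟩
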